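/- For all integers 0 ≤ t1 < t2 ≤ n, if Var(U_w(t1,t2)) > 0 and Var(U_diff(t1,t2)) > 0 under the permutation null distribution, then the 2×2 covariance matrix Σ(t1,t2) of (U1^π(t1,t2), U2^π(t1,t2)) is invertible and, for every permutation π of {1,…,n}, the Mahalanobis-type statistic decomposes as T_R^π(t1,t2) = Z_w^π(t1,t2)² + Z_diff^π(t1,t2)². -/

import Mathlib

open Finset

namespace RING

/-- `U1^π(t1,t2)`: sum of `R (π i) (π j)` over indices (1-based `i,j ∈ {1,…,n}`,
represented by `Fin n` with `i` standing for index `i+1`) with `t1 < i ≤ t2` and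
`t1 < j ≤ t2`. -/
noncomputable def U1 (n : ℕ) (R : Fin n → Fin n → ℝ) (π : Equiv.Perm (Fin n))
    (t1 t2 : ℕ) : ℝ :=
  ∑ i : Fin n, ∑ j : Fin n,
    if t1 ≤ (i : ℕ) ∧ (i : ℕ) < t2 ∧ t1 ≤ (j : ℕ) ∧ (j : ℕ) < t2 then R (π i) (π j) else 0

/-- `U2^π(t1,t2)`: sum of `R (π i) (π j)` over indices with `i ≤ t1` or `i > t2`,
and `j ≤ t1` or `j > t2`. -/
noncomputable def U2 (n : ℕ) (R : Fin n → Fin n → ℝ) (π : Equiv.Perm (Fin n))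
    (t1 t2 : ℕ) : ℝ :=
  ∑ i : Fin n, ∑ j : Fin n,
    if ((i : ℕ) < t1 ∨ t2 ≤ (i : ℕ)) ∧ ((j : ℕ) < t1 ∨ t2 ≤ (j : ℕ)) then R (π i) (π j) else 0

/-- Expectation under the permutation null distribution (uniform over all `n!`
permutations). -/
noncomputable def pexp (n : ℕ) (f : Equiv.Perm (Fin n) → ℝ) : ℝ :=
  (∑ π : Equiv.Perm (Fin n), f π) / (Nat.factorial n)

/-- Variance under the permutation null distribution. -/
noncomputable def pvar (n : ℕ) (f : Equiv.Perm (Fin n) → ℝ) : ℝ :=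
  pexp n (fun π => (f π - pexp n f) ^ 2)

/-- Covariance under the permutation null distribution. -/
noncomputable def pcov (n : ℕ) (f g : Equiv.Perm (Fin n) → ℝ) : ℝ :=
  pexp n (fun π => (f π - pexp n f) * (g π - pexp n g))

/-- `R̄_{i·} = (Σ_j R_{ij})/(n-1)`. -/
noncomputable def Rbar (n : ℕ) (R : Fin n → Fin n → ℝ) (i : Fin n) : ℝ :=
  (∑ j : Fin n, R i j) / ((n : ℝ) - 1)

/-- `r0 = (1/n) Σ_i R̄_{i·}`. -/
noncomputable def r0 (n : ℕ) (R : Fin n → Fin n → ℝ) : ℝ :=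
  (∑ i : Fin n, Rbar n R i) / n

/-- `r1² = (1/n) Σ_i R̄_{i·}²`. -/
noncomputable def r1sq (n : ℕ) (R : Fin n → Fin n → ℝ) : ℝ :=
  (∑ i : Fin n, (Rbar n R i) ^ 2) / n

/-- `r_d² = (1/(n(n-1))) Σ_i Σ_j R_{ij}²`. -/
noncomputable def rdsq (n : ℕ) (R : Fin n → Fin n → ℝ) : ℝ :=
  (∑ i : Fin n, ∑ j : Fin n, (R i j) ^ 2) / ((n : ℝ) * ((n : ℝ) - 1))

/-- `A(t) = 2t(t-1)(n-t)(n-t-1)/((n-2)(n-3))`. -/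
noncomputable def A (n t : ℕ) : ℝ :=
  2 * (t : ℝ) * ((t : ℝ) - 1) * ((n : ℝ) - t) * ((n : ℝ) - t - 1) /
    (((n : ℝ) - 2) * ((n : ℝ) - 3))

/-- `B(t) = 4t(n-t)(t-1)(t-2)(n-1)/((n-2)(n-3))`. -/
noncomputable def B (n t : ℕ) : ℝ :=
  4 * (t : ℝ) * ((n : ℝ) - t) * ((t : ℝ) - 1) * ((t : ℝ) - 2) * ((n : ℝ) - 1) /
    (((n : ℝ) - 2) * ((n : ℝ) - 3))

/-- `U_diff^π = U1^π − U2^π`. -/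
noncomputable def Udiff (n : ℕ) (R : Fin n → Fin n → ℝ) (π : Equiv.Perm (Fin n))
    (t1 t2 : ℕ) : ℝ :=
  U1 n R π t1 t2 - U2 n R π t1 t2

/-- `U_w^π = ((n−t2+t1−1)·U1^π + (t2−t1−1)·U2^π)/(n−2)`. -/
noncomputable def Uw (n : ℕ) (R : Fin n → Fin n → ℝ) (π : Equiv.Perm (Fin n))
    (t1 t2 : ℕ) : ℝ :=
  (((n : ℝ) - t2 + t1 - 1) * U1 n R π t1 t2 + ((t2 : ℝ) - t1 - 1) * U2 n R π t1 t2) /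
    ((n : ℝ) - 2)

/-- Standardized `Z_w^π(t1,t2)`. -/
noncomputable def Zw (n : ℕ) (R : Fin n → Fin n → ℝ) (π : Equiv.Perm (Fin n))
    (t1 t2 : ℕ) : ℝ :=
  (Uw n R π t1 t2 - pexp n (fun σ => Uw n R σ t1 t2)) /
    Real.sqrt (pvar n (fun σ => Uw n R σ t1 t2))

/-- Standardized `Z_diff^π(t1,t2)`. -/
noncomputable def Zdiff (n : ℕ) (R : Fin n → Fin n → ℝ) (π : Equiv.Perm (Fin n))
    (t1 t2 : ℕ) : ℝ :=
  (Udiff n R π t1 t2 - pexp n (fun σ => Udiff n R σ t1 t2)) /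
    Real.sqrt (pvar n (fun σ => Udiff n R σ t1 t2))

end RING

open RING


namespace StmtAux

variable {n : ℕ}

/-! ### Reindexing sums over the permutation group -/

lemma sum_perm_mulRight (σ : Equiv.Perm (Fin n)) (F : Equiv.Perm (Fin n) → ℝ) :
    ∑ π : Equiv.Perm (Fin n), F (π * σ) = ∑ π : Equiv.Perm (Fin n), F π :=
  Equiv.sum_comp (Equiv.mulRight σ) F

lemma exists_perm2 {i j i' j' : Fin n} (hij : i ≠ j) (hij' : i' ≠ j') :
    ∃ σ : Equiv.Perm (Fin n), σ i' = i ∧ σ j' = j := by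
  set τ1 := Equiv.swap i i' with hτ1
  have h1 : τ1 j' ≠ i := by
    intro h
    apply hij'
    have := congrArg τ1 h
    simpa [hτ1, Equiv.swap_apply_left, Equiv.swap_apply_right] using this.symm
  refine ⟨Equiv.swap (τ1 j') j * τ1, ?_, ?_⟩
  · simp only [Equiv.Perm.mul_apply]
    rw [hτ1, Equiv.swap_apply_right, Equiv.swap_apply_of_ne_of_ne (Ne.symm h1) hij]
  · simp only [Equiv.Perm.mul_apply]
    rw [Equiv.swap_apply_left]

lemma exists_perm3 {i j k i' j' k' : Fin n} (hij : i ≠ j) (hik : i ≠ k) (hjk : j ≠ k)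
    (hij' : i' ≠ j') (hik' : i' ≠ k') (hjk' : j' ≠ k') :
    ∃ σ : Equiv.Perm (Fin n), σ i' = i ∧ σ j' = j ∧ σ k' = k := by
  obtain ⟨σ2, h2i, h2j⟩ := exists_perm2 hij hij'
  have hki : σ2 k' ≠ i := by
    intro h
    exact hik' (σ2.injective (by rw [h2i, h]))
  have hkj : σ2 k' ≠ j := by
    intro h
    exact hjk' (σ2.injective (by rw [h2j, h]))
  refine ⟨Equiv.swap (σ2 k') k * σ2, ?_, ?_, ?_⟩
  · simp only [Equiv.Perm.mul_apply, h2i]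
    exact Equiv.swap_apply_of_ne_of_ne (Ne.symm hki) hik
  · simp only [Equiv.Perm.mul_apply, h2j]
    exact Equiv.swap_apply_of_ne_of_ne (Ne.symm hkj) hjk
  · simp only [Equiv.Perm.mul_apply]
    exact Equiv.swap_apply_left _ _

lemma ex1 (g : Fin n → ℝ) (i i' : Fin n) :
    ∑ π : Equiv.Perm (Fin n), g (π i') = ∑ π : Equiv.Perm (Fin n), g (π i) := by
  have h := sum_perm_mulRight (Equiv.swap i' i) (fun π => g (π i'))
  rw [← h]
  apply Finset.sum_congr rfl
  intro π _
  simp [Equiv.Perm.mul_apply, Equiv.swap_apply_left]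

lemma ex2 (F : Fin n → Fin n → ℝ) {i j i' j' : Fin n} (hij : i ≠ j) (hij' : i' ≠ j') :
    ∑ π : Equiv.Perm (Fin n), F (π i') (π j') = ∑ π : Equiv.Perm (Fin n), F (π i) (π j) := by
  obtain ⟨σ, hi, hj⟩ := exists_perm2 hij hij'
  have h := sum_perm_mulRight σ (fun π => F (π i') (π j'))
  rw [← h]
  apply Finset.sum_congr rfl
  intro π _
  simp [Equiv.Perm.mul_apply, hi, hj]

lemma ex3 (F : Fin n → Fin n → Fin n → ℝ) {i j k i' j' k' : Fin n}
    (hij : i ≠ j) (hik : i ≠ k) (hjk : j ≠ k)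
    (hij' : i' ≠ j') (hik' : i' ≠ k') (hjk' : j' ≠ k') :
    ∑ π : Equiv.Perm (Fin n), F (π i') (π j') (π k')
      = ∑ π : Equiv.Perm (Fin n), F (π i) (π j) (π k) := by
  obtain ⟨σ, hi, hj, hk⟩ := exists_perm3 hij hik hjk hij' hik' hjk'
  have h := sum_perm_mulRight σ (fun π => F (π i') (π j') (π k'))
  rw [← h]
  apply Finset.sum_congr rfl
  intro π _
  simp [Equiv.Perm.mul_apply, hi, hj, hk]

/-! ### Basic moment identities -/

lemma T1 (g : Fin n → ℝ) (i : Fin n) :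
    (n : ℝ) * ∑ π : Equiv.Perm (Fin n), g (π i)
      = (n.factorial : ℝ) * ∑ a, g a := by
  have key : ∑ i' : Fin n, ∑ π : Equiv.Perm (Fin n), g (π i')
      = ∑ π : Equiv.Perm (Fin n), ∑ a, g a := by
    rw [Finset.sum_comm]
    exact Finset.sum_congr rfl fun π _ => Equiv.sum_comp π g
  have left : ∑ i' : Fin n, ∑ π : Equiv.Perm (Fin n), g (π i')
      = (n : ℝ) * ∑ π : Equiv.Perm (Fin n), g (π i) := by
    rw [Finset.sum_congr rfl fun i' _ => ex1 g i i', Finset.sum_const, Finset.card_univ,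
      Fintype.card_fin, nsmul_eq_mul]
  rw [← left, key, Finset.sum_const, Finset.card_univ, Fintype.card_perm, Fintype.card_fin,
    nsmul_eq_mul]

lemma T2 (F : Fin n → Fin n → ℝ) {i j : Fin n} (hij : i ≠ j) :
    (n : ℝ) * (((n : ℝ) - 1) * ∑ π : Equiv.Perm (Fin n), F (π i) (π j))
      = (n.factorial : ℝ) * ∑ a, (∑ b, F a b - F a a) := by
  have step : ((n : ℝ) - 1) * ∑ π : Equiv.Perm (Fin n), F (π i) (π j)
      = ∑ π : Equiv.Perm (Fin n), (∑ b, F (π i) b - F (π i) (π i)) := by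
    have hcount : ∑ j' ∈ Finset.univ.erase i, ∑ π : Equiv.Perm (Fin n), F (π i) (π j')
        = ((n : ℝ) - 1) * ∑ π : Equiv.Perm (Fin n), F (π i) (π j) := by
      rw [Finset.sum_congr rfl (fun j' hj' => ex2 F hij (Ne.symm (Finset.ne_of_mem_erase hj'))),
        Finset.sum_const, Finset.card_erase_of_mem (Finset.mem_univ i), Finset.card_univ,
        Fintype.card_fin, nsmul_eq_mul, Nat.cast_sub i.pos, Nat.cast_one]
    rw [← hcount, Finset.sum_comm]
    apply Finset.sum_congr rfl
    intro π _
    rw [Finset.sum_erase_eq_sub (Finset.mem_univ i)]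
    congr 1
    exact Equiv.sum_comp π (fun b => F (π i) b)
  rw [step, T1 (fun a => ∑ b, F a b - F a a) i]

lemma T3 (F : Fin n → Fin n → Fin n → ℝ) {i j k : Fin n}
    (hij : i ≠ j) (hik : i ≠ k) (hjk : j ≠ k) :
    (n : ℝ) * (((n : ℝ) - 1) * (((n : ℝ) - 2) * ∑ π : Equiv.Perm (Fin n), F (π i) (π j) (π k)))
      = (n.factorial : ℝ) *
          ∑ a, (∑ b, (∑ c, F a b c - F a b a - F a b b)
                 - (∑ c, F a a c - F a a a - F a a a)) := by
  have h2 : 2 ≤ n := by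
    rcases Nat.lt_or_ge n 2 with h | h
    · exact absurd (Fin.ext (by omega : (i : ℕ) = (j : ℕ))) hij
    · exact h
  have step : ((n : ℝ) - 2) * ∑ π : Equiv.Perm (Fin n), F (π i) (π j) (π k)
      = ∑ π : Equiv.Perm (Fin n),
          (∑ c, F (π i) (π j) c - F (π i) (π j) (π i) - F (π i) (π j) (π j)) := by
    have hcount : ∑ k' ∈ (Finset.univ.erase i).erase j,
          ∑ π : Equiv.Perm (Fin n), F (π i) (π j) (π k')
        = ((n : ℝ) - 2) * ∑ π : Equiv.Perm (Fin n), F (π i) (π j) (π k) := by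
      have hc : ((Finset.univ.erase i).erase j).card = n - 2 := by
        rw [Finset.card_erase_of_mem (Finset.mem_erase.2 ⟨Ne.symm hij, Finset.mem_univ j⟩),
          Finset.card_erase_of_mem (Finset.mem_univ i), Finset.card_univ, Fintype.card_fin]
        omega
      rw [Finset.sum_congr rfl (fun k' hk' => by
        have hk'i : k' ≠ i := Finset.ne_of_mem_erase (Finset.mem_of_mem_erase hk')
        have hk'j : k' ≠ j := Finset.ne_of_mem_erase hk'
        exact ex3 F hij hik hjk hij (Ne.symm hk'i) (Ne.symm hk'j)),
        Finset.sum_const, hc, nsmul_eq_mul, Nat.cast_sub h2]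
      norm_num
    rw [← hcount, Finset.sum_comm]
    apply Finset.sum_congr rfl
    intro π _
    rw [Finset.sum_erase_eq_sub (Finset.mem_erase.2 ⟨Ne.symm hij, Finset.mem_univ j⟩),
      Finset.sum_erase_eq_sub (Finset.mem_univ i)]
    congr 2
    exact Equiv.sum_comp π (fun c => F (π i) (π j) c)
  rw [step, T2 (fun a b => ∑ c, F a b c - F a b a - F a b b) hij]

/-! ### Algebra of `pexp`, `pvar`, `pcov` -/

lemma pexp_def (f : Equiv.Perm (Fin n) → ℝ) :
    pexp n f = (∑ π : Equiv.Perm (Fin n), f π) / (n.factorial : ℝ) := rfl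

lemma Nfac_ne : ((n.factorial : ℝ)) ≠ 0 :=
  Nat.cast_ne_zero.2 (Nat.factorial_ne_zero n)

lemma sum_perm_const (c : ℝ) : ∑ _π : Equiv.Perm (Fin n), c = (n.factorial : ℝ) * c := by
  rw [Finset.sum_const, Finset.card_univ, Fintype.card_perm, Fintype.card_fin, nsmul_eq_mul]

lemma pexp_combo (a b c : ℝ) (f g : Equiv.Perm (Fin n) → ℝ) :
    pexp n (fun π => a * f π + b * g π + c) = a * pexp n f + b * pexp n g + c := by
  rw [pexp_def, pexp_def, pexp_def]
  rw [Finset.sum_add_distrib, Finset.sum_add_distrib, ← Finset.mul_sum, ← Finset.mul_sum,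
    sum_perm_const]
  field_simp

lemma pexp_quad (q11 q12 q22 q1 q2 q0 : ℝ) (f g : Equiv.Perm (Fin n) → ℝ) :
    pexp n (fun π => q11 * f π ^ 2 + q12 * (f π * g π) + q22 * g π ^ 2
        + q1 * f π + q2 * g π + q0)
      = q11 * pexp n (fun π => f π ^ 2) + q12 * pexp n (fun π => f π * g π)
        + q22 * pexp n (fun π => g π ^ 2) + q1 * pexp n f + q2 * pexp n g + q0 := by
  simp only [pexp_def]
  rw [Finset.sum_add_distrib, Finset.sum_add_distrib, Finset.sum_add_distrib,
    Finset.sum_add_distrib, Finset.sum_add_distrib, ← Finset.mul_sum, ← Finset.mul_sum,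
    ← Finset.mul_sum, ← Finset.mul_sum, ← Finset.mul_sum, sum_perm_const]
  field_simp

lemma pcov_eq (f g : Equiv.Perm (Fin n) → ℝ) :
    pcov n f g = pexp n (fun π => f π * g π) - pexp n f * pexp n g := by
  have h : (fun π => (f π - pexp n f) * (g π - pexp n g))
      = fun π => (1 : ℝ) * (f π * g π) + (-pexp n g) * f π + ((-pexp n f) * g π
          + pexp n f * pexp n g) := by
    funext π; ring
  rw [pcov, h]
  rw [show (fun π => (1:ℝ) * (f π * g π) + (-pexp n g) * f π + ((-pexp n f) * g π
          + pexp n f * pexp n g)) = fun π => (0:ℝ) * f π ^ 2 + 1 * (f π * g π) + 0 * g π ^ 2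
          + (-pexp n g) * f π + (-pexp n f) * g π + pexp n f * pexp n g from by
    funext π; ring]
  rw [pexp_quad]
  ring

lemma pvar_eq_pcov (f : Equiv.Perm (Fin n) → ℝ) : pvar n f = pcov n f f := by
  unfold pvar pcov
  congr 1
  funext π
  ring

lemma pcov_combo (a b c a' b' c' : ℝ) (f g : Equiv.Perm (Fin n) → ℝ) :
    pcov n (fun π => a * f π + b * g π + c) (fun π => a' * f π + b' * g π + c')
      = a * a' * pcov n f f + (a * b' + b * a') * pcov n f g + b * b' * pcov n g g := by
  rw [pcov_eq, pcov_eq, pcov_eq, pcov_eq, pexp_combo, pexp_combo]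
  rw [show (fun π => (a * f π + b * g π + c) * (a' * f π + b' * g π + c'))
      = fun π => (a * a') * f π ^ 2 + (a * b' + b * a') * (f π * g π) + (b * b') * g π ^ 2
          + (a * c' + c * a') * f π + (b * c' + c * b') * g π + c * c' from by
    funext π; ring]
  rw [pexp_quad]
  rw [show pexp n (fun π => f π * f π) = pexp n (fun π => f π ^ 2) from by
    congr 1; funext π; ring]
  rw [show pexp n (fun π => g π * g π) = pexp n (fun π => g π ^ 2) from by
    congr 1; funext π; ring]
  ring

lemma pcov_f_combo (a' b' c' : ℝ) (f g : Equiv.Perm (Fin n) → ℝ) :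
    pcov n f (fun π => a' * f π + b' * g π + c')
      = a' * pcov n f f + b' * pcov n f g := by
  rw [pcov_eq, pcov_eq, pcov_eq, pexp_combo]
  rw [show (fun π => f π * (a' * f π + b' * g π + c'))
      = fun π => a' * f π ^ 2 + b' * (f π * g π) + (0:ℝ) * g π ^ 2
          + c' * f π + 0 * g π + 0 from by
    funext π; ring]
  rw [pexp_quad]
  rw [show pexp n (fun π => f π * f π) = pexp n (fun π => f π ^ 2) from by
    congr 1; funext π; ring]
  ring

/-! ### Structural identities for the statistics -/

def Bset (n t1 t2 : ℕ) : Finset (Fin n) :=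
  univ.filter (fun i => t1 ≤ (i : ℕ) ∧ (i : ℕ) < t2)

noncomputable def rr (n : ℕ) (R : Fin n → Fin n → ℝ) (a : Fin n) : ℝ := ∑ b, R a b
noncomputable def SS (n : ℕ) (R : Fin n → Fin n → ℝ) : ℝ := ∑ a, rr n R a
noncomputable def WW (n : ℕ) (R : Fin n → Fin n → ℝ) : ℝ := ∑ a, (rr n R a) ^ 2
noncomputable def LL (n : ℕ) (R : Fin n → Fin n → ℝ) (t1 t2 : ℕ)
    (π : Equiv.Perm (Fin n)) : ℝ := ∑ i ∈ Bset n t1 t2, rr n R (π i)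

lemma U1_eq (R : Fin n → Fin n → ℝ) (π : Equiv.Perm (Fin n)) (t1 t2 : ℕ) :
    U1 n R π t1 t2 = ∑ i ∈ Bset n t1 t2, ∑ j ∈ Bset n t1 t2, R (π i) (π j) := by
  unfold U1 Bset
  rw [eq_comm]
  simp only [Finset.sum_filter]
  apply Finset.sum_congr rfl
  intro i _
  by_cases hi : t1 ≤ (i : ℕ) ∧ (i : ℕ) < t2
  · rw [if_pos hi]
    apply Finset.sum_congr rfl
    intro j _
    by_cases hj : t1 ≤ (j : ℕ) ∧ (j : ℕ) < t2
    · rw [if_pos hj, if_pos ⟨hi.1, hi.2, hj.1, hj.2⟩]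
    · rw [if_neg hj, if_neg (by tauto)]
  · rw [if_neg hi, eq_comm, Finset.sum_eq_zero]
    intro j _
    rw [if_neg (by tauto)]

lemma U2_eq (R : Fin n → Fin n → ℝ) (π : Equiv.Perm (Fin n)) (t1 t2 : ℕ) :
    U2 n R π t1 t2 = ∑ i ∈ univ.filter (fun i : Fin n => ¬(t1 ≤ (i : ℕ) ∧ (i : ℕ) < t2)),
      ∑ j ∈ univ.filter (fun j : Fin n => ¬(t1 ≤ (j : ℕ) ∧ (j : ℕ) < t2)), R (π i) (π j) := by
  unfold U2
  rw [eq_comm]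
  simp only [Finset.sum_filter]
  apply Finset.sum_congr rfl
  intro i _
  by_cases hi : t1 ≤ (i : ℕ) ∧ (i : ℕ) < t2
  · rw [if_neg (by tauto), eq_comm, Finset.sum_eq_zero]
    intro j _
    rw [if_neg (by push_neg; intro h; omega)]
  · rw [if_pos hi]
    apply Finset.sum_congr rfl
    intro j _
    by_cases hj : t1 ≤ (j : ℕ) ∧ (j : ℕ) < t2
    · rw [if_neg (by tauto), if_neg (by push_neg; intro h; omega)]
    · rw [if_pos hj, if_pos (by constructor <;> omega)]

lemma row1 (R : Fin n → Fin n → ℝ) (π : Equiv.Perm (Fin n)) (a : Fin n) :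
    ∑ j : Fin n, R a (π j) = rr n R a :=
  Equiv.sum_comp π (fun b => R a b)

lemma U2_decomp (R : Fin n → Fin n → ℝ) (hsym : ∀ i j, R i j = R j i)
    (π : Equiv.Perm (Fin n)) (t1 t2 : ℕ) :
    U2 n R π t1 t2 = SS n R + U1 n R π t1 t2 - 2 * LL n R t1 t2 π := by
  classical
  set p := fun i : Fin n => t1 ≤ (i : ℕ) ∧ (i : ℕ) < t2 with hp
  set B := univ.filter p with hB
  set Bc := univ.filter (fun i => ¬ p i) with hBc
  have hsplit : ∀ h : Fin n → ℝ, (∑ i ∈ B, h i) + ∑ i ∈ Bc, h i = ∑ i, h i := fun h =>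
    Finset.sum_filter_add_sum_filter_not univ p h
  have htot : (∑ i : Fin n, ∑ j : Fin n, R (π i) (π j)) = SS n R := by
    unfold SS
    calc ∑ i : Fin n, ∑ j : Fin n, R (π i) (π j) = ∑ i : Fin n, rr n R (π i) :=
          Finset.sum_congr rfl fun i _ => row1 R π (π i)
      _ = ∑ a, rr n R a := Equiv.sum_comp π (rr n R)
  have hLrow : ∀ s : Finset (Fin n), (∑ i ∈ s, rr n R (π i))
      = (∑ i ∈ s, ∑ j ∈ B, R (π i) (π j)) + ∑ i ∈ s, ∑ j ∈ Bc, R (π i) (π j) := by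
    intro s
    rw [← Finset.sum_add_distrib]
    apply Finset.sum_congr rfl
    intro i _
    rw [hsplit (fun j => R (π i) (π j)), row1]
  have hcross : (∑ i ∈ B, ∑ j ∈ Bc, R (π i) (π j))
      = ∑ i ∈ Bc, ∑ j ∈ B, R (π i) (π j) := by
    rw [Finset.sum_comm]
    exact Finset.sum_congr rfl fun i _ => Finset.sum_congr rfl fun j _ => hsym _ _
  have hBsum : (∑ i ∈ B, rr n R (π i)) + ∑ i ∈ Bc, rr n R (π i) = SS n R := by
    unfold SS
    rw [hsplit (fun i => rr n R (π i))]
    exact Equiv.sum_comp π (rr n R)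
  have hL1 : LL n R t1 t2 π = (∑ i ∈ B, ∑ j ∈ B, R (π i) (π j))
      + ∑ i ∈ B, ∑ j ∈ Bc, R (π i) (π j) := hLrow B
  have hL2 : (∑ i ∈ Bc, rr n R (π i)) = (∑ i ∈ Bc, ∑ j ∈ B, R (π i) (π j))
      + ∑ i ∈ Bc, ∑ j ∈ Bc, R (π i) (π j) := hLrow Bc
  have hu1 : U1 n R π t1 t2 = ∑ i ∈ B, ∑ j ∈ B, R (π i) (π j) := U1_eq R π t1 t2
  have hu2 : U2 n R π t1 t2 = ∑ i ∈ Bc, ∑ j ∈ Bc, R (π i) (π j) := U2_eq R π t1 t2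
  have hLL : LL n R t1 t2 π = ∑ i ∈ B, rr n R (π i) := rfl
  linarith [hL1, hL2, hBsum, hcross]

/-! ### Nonvanishing casts -/

lemma hcast4 (hn : 4 ≤ n) : (4 : ℝ) ≤ (n : ℝ) := by exact_mod_cast hn
lemma hn0' (hn : 4 ≤ n) : (n : ℝ) ≠ 0 := by have := hcast4 hn; intro h; rw [h] at this; linarith
lemma hn1' (hn : 4 ≤ n) : (n : ℝ) - 1 ≠ 0 := by
  have := hcast4 hn; intro h; have : (n : ℝ) = 1 := by linarith
  linarith [hcast4 hn, this]
lemma hn2' (hn : 4 ≤ n) : (n : ℝ) - 2 ≠ 0 := by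
  have h4 := hcast4 hn; intro h; have : (n : ℝ) = 2 := by linarith
  linarith
lemma hn3' (hn : 4 ≤ n) : (n : ℝ) - 3 ≠ 0 := by
  have h4 := hcast4 hn; intro h; have : (n : ℝ) = 3 := by linarith
  linarith

/-! ### Individual permutation moments -/

lemma rowsum (R : Fin n → Fin n → ℝ) (hsym : ∀ i j, R i j = R j i) (a : Fin n) :
    ∑ b, R b a = rr n R a :=
  Finset.sum_congr rfl fun b _ => hsym b a

lemma val1r (hn : 4 ≤ n) (R : Fin n → Fin n → ℝ) (i : Fin n) :
    ∑ π : Equiv.Perm (Fin n), rr n R (π i) = (n.factorial : ℝ) * SS n R / n := by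
  rw [eq_div_iff (hn0' hn), mul_comm _ ((n : ℝ))]
  exact T1 (rr n R) i

lemma val1r2 (hn : 4 ≤ n) (R : Fin n → Fin n → ℝ) (i : Fin n) :
    ∑ π : Equiv.Perm (Fin n), (rr n R (π i)) ^ 2 = (n.factorial : ℝ) * WW n R / n := by
  rw [eq_div_iff (hn0' hn), mul_comm _ ((n : ℝ))]
  exact T1 (fun a => (rr n R a) ^ 2) i

lemma val2R (hn : 4 ≤ n) (R : Fin n → Fin n → ℝ) (hdiag : ∀ i, R i i = 0)
    {i j : Fin n} (hij : i ≠ j) :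
    ∑ π : Equiv.Perm (Fin n), R (π i) (π j)
      = (n.factorial : ℝ) * SS n R / ((n : ℝ) * ((n : ℝ) - 1)) := by
  have h := T2 R hij
  have hval : ∑ a, (∑ b, R a b - R a a) = SS n R := by
    apply Finset.sum_congr rfl
    intro a _
    rw [hdiag a, sub_zero]
    rfl
  rw [hval] at h
  rw [eq_div_iff (mul_ne_zero (hn0' hn) (hn1' hn))]
  linear_combination h

lemma val2rr (hn : 4 ≤ n) (R : Fin n → Fin n → ℝ) {i j : Fin n} (hij : i ≠ j) :
    ∑ π : Equiv.Perm (Fin n), rr n R (π i) * rr n R (π j)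
      = (n.factorial : ℝ) * (SS n R * SS n R - WW n R) / ((n : ℝ) * ((n : ℝ) - 1)) := by
  have h := T2 (fun a b => rr n R a * rr n R b) hij
  have hval : ∑ a, ((∑ b, rr n R a * rr n R b) - rr n R a * rr n R a)
      = SS n R * SS n R - WW n R := by
    have h1 : ∀ a : Fin n, ((∑ b, rr n R a * rr n R b) - rr n R a * rr n R a)
        = rr n R a * SS n R - (rr n R a) ^ 2 := by
      intro a
      rw [← Finset.mul_sum]
      show rr n R a * SS n R - _ = _
      ring
    rw [Finset.sum_congr rfl fun a _ => h1 a, Finset.sum_sub_distrib, ← Finset.sum_mul]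
    show SS n R * SS n R - WW n R = _
    ring
  rw [hval] at h
  rw [eq_div_iff (mul_ne_zero (hn0' hn) (hn1' hn))]
  linear_combination h

lemma val2Ra (hn : 4 ≤ n) (R : Fin n → Fin n → ℝ) (hdiag : ∀ i, R i i = 0)
    {i j : Fin n} (hij : i ≠ j) :
    ∑ π : Equiv.Perm (Fin n), R (π i) (π j) * rr n R (π i)
      = (n.factorial : ℝ) * WW n R / ((n : ℝ) * ((n : ℝ) - 1)) := by
  have h := T2 (fun a b => R a b * rr n R a) hij
  have hval : ∑ a, ((∑ b, R a b * rr n R a) - R a a * rr n R a) = WW n R := by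
    apply Finset.sum_congr rfl
    intro a _
    rw [← Finset.sum_mul, hdiag a]
    show rr n R a * rr n R a - 0 * rr n R a = _
    ring
  rw [hval] at h
  rw [eq_div_iff (mul_ne_zero (hn0' hn) (hn1' hn))]
  linear_combination h

lemma val2Rb (hn : 4 ≤ n) (R : Fin n → Fin n → ℝ) (hsym : ∀ i j, R i j = R j i)
    (hdiag : ∀ i, R i i = 0) {i j : Fin n} (hij : i ≠ j) :
    ∑ π : Equiv.Perm (Fin n), R (π i) (π j) * rr n R (π j)
      = (n.factorial : ℝ) * WW n R / ((n : ℝ) * ((n : ℝ) - 1)) := by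
  have h := T2 (fun a b => R a b * rr n R b) hij
  have hval : ∑ a, ((∑ b, R a b * rr n R b) - R a a * rr n R a) = WW n R := by
    have h1 : ∑ a, ((∑ b, R a b * rr n R b) - R a a * rr n R a)
        = ∑ a : Fin n, ∑ b, R a b * rr n R b := by
      apply Finset.sum_congr rfl
      intro a _
      rw [hdiag a]
      ring
    rw [h1, Finset.sum_comm]
    apply Finset.sum_congr rfl
    intro b _
    rw [← Finset.sum_mul, rowsum R hsym b]
    show rr n R b * rr n R b = rr n R b ^ 2
    ring
  rw [hval] at h
  rw [eq_div_iff (mul_ne_zero (hn0' hn) (hn1' hn))]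
  linear_combination h

lemma val3 (hn : 4 ≤ n) (R : Fin n → Fin n → ℝ) (hsym : ∀ i j, R i j = R j i)
    (hdiag : ∀ i, R i i = 0) {i j k : Fin n} (hij : i ≠ j) (hik : i ≠ k) (hjk : j ≠ k) :
    ∑ π : Equiv.Perm (Fin n), R (π i) (π j) * rr n R (π k)
      = (n.factorial : ℝ) * (SS n R * SS n R - 2 * WW n R)
          / ((n : ℝ) * ((n : ℝ) - 1) * ((n : ℝ) - 2)) := by
  have h := T3 (fun a b c => R a b * rr n R c) hij hik hjk
  have hval : ∑ a, ((∑ b, ((∑ c, R a b * rr n R c) - R a b * rr n R a - R a b * rr n R b))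
        - ((∑ c, R a a * rr n R c) - R a a * rr n R a - R a a * rr n R a))
      = SS n R * SS n R - 2 * WW n R := by
    have h1 : ∀ a : Fin n, ((∑ c, R a a * rr n R c) - R a a * rr n R a - R a a * rr n R a)
        = 0 := by
      intro a
      rw [hdiag a]
      simp
    have h2 : ∀ a b : Fin n, ((∑ c, R a b * rr n R c) - R a b * rr n R a - R a b * rr n R b)
        = R a b * SS n R - R a b * rr n R a - R a b * rr n R b := by
      intro a b
      rw [← Finset.mul_sum]
      rfl
    have e1 : ∑ a : Fin n, ∑ b, R a b * SS n R = SS n R * SS n R := by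
      have ha : ∀ a : Fin n, ∑ b, R a b * SS n R = rr n R a * SS n R := by
        intro a
        rw [← Finset.sum_mul]
        rfl
      rw [Finset.sum_congr rfl fun a _ => ha a, ← Finset.sum_mul]
      rfl
    have e2 : ∑ a : Fin n, ∑ b, R a b * rr n R a = WW n R := by
      apply Finset.sum_congr rfl
      intro a _
      rw [← Finset.sum_mul]
      show rr n R a * rr n R a = rr n R a ^ 2
      ring
    have e3 : ∑ a : Fin n, ∑ b, R a b * rr n R b = WW n R := by
      rw [Finset.sum_comm]
      apply Finset.sum_congr rfl
      intro b _
      rw [← Finset.sum_mul, rowsum R hsym b]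
      show rr n R b * rr n R b = rr n R b ^ 2
      ring
    calc ∑ a, ((∑ b, ((∑ c, R a b * rr n R c) - R a b * rr n R a - R a b * rr n R b))
          - ((∑ c, R a a * rr n R c) - R a a * rr n R a - R a a * rr n R a))
        = ∑ a, (∑ b, (R a b * SS n R - R a b * rr n R a - R a b * rr n R b)) := by
          apply Finset.sum_congr rfl
          intro a _
          rw [h1 a, sub_zero]
          exact Finset.sum_congr rfl fun b _ => h2 a b
      _ = (∑ a : Fin n, ∑ b, R a b * SS n R) - (∑ a : Fin n, ∑ b, R a b * rr n R a)
            - (∑ a : Fin n, ∑ b, R a b * rr n R b) := by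
          rw [← Finset.sum_sub_distrib, ← Finset.sum_sub_distrib]
          apply Finset.sum_congr rfl
          intro a _
          rw [← Finset.sum_sub_distrib, ← Finset.sum_sub_distrib]
      _ = SS n R * SS n R - 2 * WW n R := by rw [e1, e2, e3]; ring
  rw [hval] at h
  rw [eq_div_iff (mul_ne_zero (mul_ne_zero (hn0' hn) (hn1' hn)) (hn2' hn))]
  linear_combination h

/-! ### Counting -/

lemma Bset_card {t1 t2 : ℕ} (h2n : t2 ≤ n) : (Bset n t1 t2).card = t2 - t1 := by
  have himg : (Bset n t1 t2).image Fin.val = Finset.Ico t1 t2 := by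
    ext a
    simp only [Bset, Finset.mem_image, Finset.mem_filter, Finset.mem_univ, true_and,
      Finset.mem_Ico]
    constructor
    · rintro ⟨i, ⟨h1, h2⟩, rfl⟩; exact ⟨h1, h2⟩
    · rintro ⟨h1, h2⟩; exact ⟨⟨a, lt_of_lt_of_le h2 h2n⟩, ⟨h1, h2⟩, rfl⟩
  have h := Finset.card_image_of_injective (Bset n t1 t2) Fin.val_injective
  rw [himg, Nat.card_Ico] at h
  omega

lemma count_pair (s : Finset (Fin n)) (X Y : ℝ) :
    ∑ i ∈ s, ∑ j ∈ s, (if i = j then X else Y)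
      = (s.card : ℝ) * ((s.card : ℝ) * Y + X - Y) := by
  have hrow : ∀ i ∈ s, ∑ j ∈ s, (if i = j then X else Y) = (s.card : ℝ) * Y + X - Y := by
    intro i hi
    have hterm : ∀ j, (if i = j then X else Y) = Y + (if i = j then X - Y else 0) := by
      intro j; split_ifs <;> ring
    rw [Finset.sum_congr rfl fun j _ => hterm j, Finset.sum_add_distrib, Finset.sum_const,
      Finset.sum_ite_eq, if_pos hi, nsmul_eq_mul]
    ring
  rw [Finset.sum_congr rfl hrow, Finset.sum_const, nsmul_eq_mul]

lemma count_triple (s : Finset (Fin n)) (X2 X3 : ℝ) :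
    ∑ i ∈ s, ∑ j ∈ s, ∑ k ∈ s, (if i = j then 0 else if k = i ∨ k = j then X2 else X3)
      = (s.card : ℝ) * ((s.card : ℝ) - 1) * (2 * X2 + ((s.card : ℝ) - 2) * X3) := by
  have hinner : ∀ i ∈ s, ∀ j ∈ s, i ≠ j →
      ∑ k ∈ s, (if k = i ∨ k = j then X2 else X3)
        = (s.card : ℝ) * X3 + 2 * (X2 - X3) := by
    intro i hi j hj hij
    have hterm : ∀ k, (if k = i ∨ k = j then X2 else X3)
        = X3 + ((if k = i then X2 - X3 else 0) + (if k = j then X2 - X3 else 0)) := by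
      intro k
      by_cases hki : k = i <;> by_cases hkj : k = j
      · exact absurd (hki.symm.trans hkj) hij
      · simp [hki, hkj, hij, Ne.symm hij]
      · simp [hki, hkj, hij, Ne.symm hij]
      · simp [hki, hkj]
    rw [Finset.sum_congr rfl fun k _ => hterm k, Finset.sum_add_distrib,
      Finset.sum_add_distrib, Finset.sum_const, nsmul_eq_mul,
      Finset.sum_ite_eq', if_pos hi, Finset.sum_ite_eq', if_pos hj]
    ring
  have houter : ∀ i ∈ s, ∀ j ∈ s,
      (∑ k ∈ s, (if i = j then 0 else if k = i ∨ k = j then X2 else X3))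
        = (if i = j then (0 : ℝ) else (s.card : ℝ) * X3 + 2 * (X2 - X3)) := by
    intro i hi j hj
    by_cases h : i = j
    · simp [h]
    · rw [if_neg h, ← hinner i hi j hj h]
      exact Finset.sum_congr rfl fun k _ => by rw [if_neg h]
  rw [Finset.sum_congr rfl fun i hi => Finset.sum_congr rfl fun j hj => houter i hi j hj]
  rw [count_pair]
  ring

/-! ### The four aggregated moments -/

lemma momU1 (hn : 4 ≤ n) (R : Fin n → Fin n → ℝ) (hdiag : ∀ i, R i i = 0)
    {t1 t2 : ℕ} (h12 : t1 < t2) (h2n : t2 ≤ n) :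
    ∑ π : Equiv.Perm (Fin n), U1 n R π t1 t2
      = ((t2 - t1 : ℕ) : ℝ) * (((t2 - t1 : ℕ) : ℝ) - 1)
          * ((n.factorial : ℝ) * SS n R / ((n : ℝ) * ((n : ℝ) - 1))) := by
  have hv : ∀ i j : Fin n, ∑ π : Equiv.Perm (Fin n), R (π i) (π j)
      = (if i = j then 0 else (n.factorial : ℝ) * SS n R / ((n : ℝ) * ((n : ℝ) - 1))) := by
    intro i j
    by_cases h : i = j
    · subst h
      rw [if_pos rfl]
      exact Finset.sum_eq_zero fun π _ => hdiag (π i)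
    · rw [if_neg h]
      exact val2R hn R hdiag h
  rw [Finset.sum_congr rfl fun π _ => U1_eq R π t1 t2, Finset.sum_comm]
  rw [Finset.sum_congr rfl fun i (_ : i ∈ Bset n t1 t2) => Finset.sum_comm]
  rw [Finset.sum_congr rfl fun i (_ : i ∈ Bset n t1 t2) =>
    Finset.sum_congr rfl fun j (_ : j ∈ Bset n t1 t2) => hv i j]
  rw [count_pair, Bset_card h2n]
  ring

lemma momL (hn : 4 ≤ n) (R : Fin n → Fin n → ℝ) {t1 t2 : ℕ} (h2n : t2 ≤ n) :
    ∑ π : Equiv.Perm (Fin n), LL n R t1 t2 π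
      = ((t2 - t1 : ℕ) : ℝ) * ((n.factorial : ℝ) * SS n R / n) := by
  unfold LL
  rw [Finset.sum_comm]
  rw [Finset.sum_congr rfl fun i (_ : i ∈ Bset n t1 t2) => val1r hn R i, Finset.sum_const,
    nsmul_eq_mul, Bset_card h2n]

lemma momL2 (hn : 4 ≤ n) (R : Fin n → Fin n → ℝ) {t1 t2 : ℕ} (h2n : t2 ≤ n) :
    ∑ π : Equiv.Perm (Fin n), (LL n R t1 t2 π) ^ 2
      = ((t2 - t1 : ℕ) : ℝ) * (((t2 - t1 : ℕ) : ℝ)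
            * ((n.factorial : ℝ) * (SS n R * SS n R - WW n R) / ((n : ℝ) * ((n : ℝ) - 1)))
          + (n.factorial : ℝ) * WW n R / n
          - (n.factorial : ℝ) * (SS n R * SS n R - WW n R) / ((n : ℝ) * ((n : ℝ) - 1))) := by
  have hsq : ∀ π : Equiv.Perm (Fin n), (LL n R t1 t2 π) ^ 2
      = ∑ i ∈ Bset n t1 t2, ∑ j ∈ Bset n t1 t2, rr n R (π i) * rr n R (π j) := by
    intro π
    rw [sq]
    exact Finset.sum_mul_sum _ _ _ _
  have hv : ∀ i j : Fin n, ∑ π : Equiv.Perm (Fin n), rr n R (π i) * rr n R (π j)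
      = (if i = j then (n.factorial : ℝ) * WW n R / n
         else (n.factorial : ℝ) * (SS n R * SS n R - WW n R) / ((n : ℝ) * ((n : ℝ) - 1))) := by
    intro i j
    by_cases h : i = j
    · subst h
      rw [if_pos rfl, ← val1r2 hn R i]
      exact Finset.sum_congr rfl fun π _ => (sq (rr n R (π i))).symm
    · rw [if_neg h]
      exact val2rr hn R h
  rw [Finset.sum_congr rfl fun π _ => hsq π, Finset.sum_comm]
  rw [Finset.sum_congr rfl fun i (_ : i ∈ Bset n t1 t2) => Finset.sum_comm]
  rw [Finset.sum_congr rfl fun i (_ : i ∈ Bset n t1 t2) =>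
    Finset.sum_congr rfl fun j (_ : j ∈ Bset n t1 t2) => hv i j]
  rw [count_pair, Bset_card h2n]

lemma momU1L (hn : 4 ≤ n) (R : Fin n → Fin n → ℝ) (hsym : ∀ i j, R i j = R j i)
    (hdiag : ∀ i, R i i = 0) {t1 t2 : ℕ} (h12 : t1 < t2) (h2n : t2 ≤ n) :
    ∑ π : Equiv.Perm (Fin n), U1 n R π t1 t2 * LL n R t1 t2 π
      = ((t2 - t1 : ℕ) : ℝ) * (((t2 - t1 : ℕ) : ℝ) - 1)
          * (2 * ((n.factorial : ℝ) * WW n R / ((n : ℝ) * ((n : ℝ) - 1)))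
            + (((t2 - t1 : ℕ) : ℝ) - 2) * ((n.factorial : ℝ)
                * (SS n R * SS n R - 2 * WW n R)
                / ((n : ℝ) * ((n : ℝ) - 1) * ((n : ℝ) - 2)))) := by
  have hexp : ∀ π : Equiv.Perm (Fin n), U1 n R π t1 t2 * LL n R t1 t2 π
      = ∑ i ∈ Bset n t1 t2, ∑ j ∈ Bset n t1 t2, ∑ k ∈ Bset n t1 t2,
          R (π i) (π j) * rr n R (π k) := by
    intro π
    rw [U1_eq R π t1 t2, Finset.sum_mul]
    apply Finset.sum_congr rfl
    intro i _
    rw [Finset.sum_mul]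
    apply Finset.sum_congr rfl
    intro j _
    exact Finset.mul_sum _ _ _
  have hv : ∀ i j k : Fin n, ∑ π : Equiv.Perm (Fin n), R (π i) (π j) * rr n R (π k)
      = (if i = j then 0 else if k = i ∨ k = j
          then (n.factorial : ℝ) * WW n R / ((n : ℝ) * ((n : ℝ) - 1))
          else (n.factorial : ℝ) * (SS n R * SS n R - 2 * WW n R)
                / ((n : ℝ) * ((n : ℝ) - 1) * ((n : ℝ) - 2))) := by
    intro i j k
    by_cases hij : i = j
    · subst hij
      rw [if_pos rfl]
      apply Finset.sum_eq_zero
      intro π _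
      rw [hdiag (π i), zero_mul]
    · rw [if_neg hij]
      by_cases hki : k = i
      · subst hki
        rw [if_pos (Or.inl rfl)]
        exact val2Ra hn R hdiag hij
      · by_cases hkj : k = j
        · subst hkj
          rw [if_pos (Or.inr rfl)]
          exact val2Rb hn R hsym hdiag hij
        · rw [if_neg (by tauto)]
          exact val3 hn R hsym hdiag hij (fun h => hki h.symm) (fun h => hkj h.symm)
  have hswap : ∑ π : Equiv.Perm (Fin n), U1 n R π t1 t2 * LL n R t1 t2 π
      = ∑ i ∈ Bset n t1 t2, ∑ j ∈ Bset n t1 t2, ∑ k ∈ Bset n t1 t2,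
          ∑ π : Equiv.Perm (Fin n), R (π i) (π j) * rr n R (π k) := by
    rw [Finset.sum_congr rfl fun π _ => hexp π, Finset.sum_comm]
    apply Finset.sum_congr rfl
    intro i _
    rw [Finset.sum_comm]
    apply Finset.sum_congr rfl
    intro j _
    rw [Finset.sum_comm]
  rw [hswap]
  rw [Finset.sum_congr rfl fun i (_ : i ∈ Bset n t1 t2) =>
    Finset.sum_congr rfl fun j (_ : j ∈ Bset n t1 t2) =>
      Finset.sum_congr rfl fun k (_ : k ∈ Bset n t1 t2) => hv i j k]
  rw [count_triple, Bset_card h2n]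

/-! ### Quadratic form evaluation and final algebra -/

open Matrix in
lemma quadform_eval (a b c d v1 v2 : ℝ) :
    ![v1, v2] ⬝ᵥ ((!![a, b; c, d])⁻¹ *ᵥ ![v1, v2])
      = (v1 * (d * v1 - b * v2) + v2 * (-c * v1 + a * v2)) / (a * d - b * c) := by
  rw [Matrix.inv_def, Matrix.adjugate_fin_two, Matrix.det_fin_two]
  simp [Matrix.mulVec, dotProduct, Fin.sum_univ_two, Ring.inverse_eq_inv']
  ring

lemma final_algebra (VF Q VL bb x z V1 C V2 Vw Vd : ℝ)
    (hV1 : V1 = VF) (hC : C = VF - 2*Q) (hV2 : V2 = VF - 4*Q + 4*VL)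
    (hVw : Vw = VF - 4*bb*Q + 4*bb^2*VL) (hVd : Vd = 4*VL)
    (hK : Q = 2*bb*VL) (hVwpos : 0 < Vw) (hVdpos : 0 < Vd) :
    (x * (V2 * x - C * (x - 2*z)) + (x - 2*z) * (-C * x + V1 * (x - 2*z))) / (V1*V2 - C*C)
      = (x - 2*bb*z)^2 / Vw + (2*z)^2 / Vd := by
  have hVL : 0 < VL := by rw [hVd] at hVdpos; linarith
  have hVw' : Vw = VF - 4*bb^2*VL := by rw [hVw, hK]; ring
  have hdet : V1*V2 - C*C = Vd * Vw := by rw [hV1, hC, hV2, hVw', hVd, hK]; ring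
  have hVwne : Vw ≠ 0 := ne_of_gt hVwpos
  have hVdne : Vd ≠ 0 := ne_of_gt hVdpos
  rw [hdet]
  rw [div_add_div _ _ hVwne hVdne, div_eq_div_iff (by positivity) (by positivity)]
  rw [hV1, hC, hV2, hVw', hVd, hK]
  ring

end StmtAux

open Matrix in
/-- For all integers `0 ≤ t1 < t2 ≤ n`, if `Var(U_w(t1,t2)) > 0` and
`Var(U_diff(t1,t2)) > 0` under the permutation null distribution, then the 2×2
covariance matrix `Σ(t1,t2)` of `(U1^π, U2^π)` is invertible and, for every
permutation `π`, the Mahalanobis-type statistic decomposes as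
`T_R^π(t1,t2) = Z_w^π(t1,t2)² + Z_diff^π(t1,t2)²`. -/
theorem stmt8 (n : ℕ) (hn : 4 ≤ n) (R : Fin n → Fin n → ℝ)
    (hsym : ∀ i j, R i j = R j i) (hdiag : ∀ i, R i i = 0)
    (t1 t2 : ℕ) (h12 : t1 < t2) (h2n : t2 ≤ n)
    (hvarw : 0 < pvar n (fun π => Uw n R π t1 t2))
    (hvard : 0 < pvar n (fun π => Udiff n R π t1 t2)) :
    IsUnit
      (!![pvar n (fun π => U1 n R π t1 t2),
            pcov n (fun π => U1 n R π t1 t2) (fun π => U2 n R π t1 t2);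
          pcov n (fun π => U1 n R π t1 t2) (fun π => U2 n R π t1 t2),
            pvar n (fun π => U2 n R π t1 t2)])
      ∧ ∀ π : Equiv.Perm (Fin n),
        ![U1 n R π t1 t2 - pexp n (fun σ => U1 n R σ t1 t2),
          U2 n R π t1 t2 - pexp n (fun σ => U2 n R σ t1 t2)]
          ⬝ᵥ
          ((!![pvar n (fun π => U1 n R π t1 t2),
                pcov n (fun π => U1 n R π t1 t2) (fun π => U2 n R π t1 t2);
              pcov n (fun π => U1 n R π t1 t2) (fun π => U2 n R π t1 t2),
                pvar n (fun π => U2 n R π t1 t2)])⁻¹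
            *ᵥ ![U1 n R π t1 t2 - pexp n (fun σ => U1 n R σ t1 t2),
                 U2 n R π t1 t2 - pexp n (fun σ => U2 n R σ t1 t2)])
        = Zw n R π t1 t2 ^ 2 + Zdiff n R π t1 t2 ^ 2 := by
  classical
  have hNne : ((n.factorial : ℝ)) ≠ 0 := StmtAux.Nfac_ne
  have hn0 : (n : ℝ) ≠ 0 := StmtAux.hn0' hn
  have hn1 : (n : ℝ) - 1 ≠ 0 := StmtAux.hn1' hn
  have hn2 : (n : ℝ) - 2 ≠ 0 := StmtAux.hn2' hn
  have hMcast : ((t2 - t1 : ℕ) : ℝ) = (t2 : ℝ) - (t1 : ℝ) :=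
    Nat.cast_sub (le_of_lt h12)
  -- expectation values
  have he1 : pexp n (fun π => U1 n R π t1 t2)
      = ((t2 : ℝ) - t1) * (((t2 : ℝ) - t1) - 1) * StmtAux.SS n R
          / ((n : ℝ) * ((n : ℝ) - 1)) := by
    rw [StmtAux.pexp_def]
    rw [StmtAux.momU1 hn R hdiag h12 h2n, hMcast]
    field_simp
  have heL : pexp n (fun π => StmtAux.LL n R t1 t2 π)
      = ((t2 : ℝ) - t1) * StmtAux.SS n R / (n : ℝ) := by
    rw [StmtAux.pexp_def]
    rw [StmtAux.momL hn R h2n, hMcast]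
    field_simp
  have hELL : pexp n (fun π => StmtAux.LL n R t1 t2 π * StmtAux.LL n R t1 t2 π)
      = ((t2 : ℝ) - t1) * ((((t2 : ℝ) - t1) - 1)
            * (StmtAux.SS n R * StmtAux.SS n R - StmtAux.WW n R)
            / ((n : ℝ) * ((n : ℝ) - 1))
          + StmtAux.WW n R / (n : ℝ)) := by
    rw [StmtAux.pexp_def]
    rw [show (∑ π : Equiv.Perm (Fin n), StmtAux.LL n R t1 t2 π * StmtAux.LL n R t1 t2 π)
        = ∑ π : Equiv.Perm (Fin n), (StmtAux.LL n R t1 t2 π) ^ 2 from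
      Finset.sum_congr rfl fun π _ => (sq (StmtAux.LL n R t1 t2 π)).symm]
    rw [StmtAux.momL2 hn R h2n, hMcast]
    field_simp
    ring
  have hE1L : pexp n (fun π => U1 n R π t1 t2 * StmtAux.LL n R t1 t2 π)
      = ((t2 : ℝ) - t1) * (((t2 : ℝ) - t1) - 1)
          * (2 * (StmtAux.WW n R / ((n : ℝ) * ((n : ℝ) - 1)))
            + (((t2 : ℝ) - t1) - 2) * ((StmtAux.SS n R * StmtAux.SS n R
                - 2 * StmtAux.WW n R) / ((n : ℝ) * ((n : ℝ) - 1) * ((n : ℝ) - 2)))) := by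
    rw [StmtAux.pexp_def]
    rw [StmtAux.momU1L hn R hsym hdiag h12 h2n, hMcast]
    field_simp
  -- combination structure of the statistics
  have hU2fun : (fun π => U2 n R π t1 t2)
      = fun π => 1 * U1 n R π t1 t2 + (-2) * StmtAux.LL n R t1 t2 π + StmtAux.SS n R := by
    funext π
    rw [StmtAux.U2_decomp R hsym π t1 t2]
    ring
  have hUdfun : (fun π => Udiff n R π t1 t2)
      = fun π => 0 * U1 n R π t1 t2 + 2 * StmtAux.LL n R t1 t2 π + (- StmtAux.SS n R) := by
    funext π
    rw [show Udiff n R π t1 t2 = U1 n R π t1 t2 - U2 n R π t1 t2 from rfl,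
      StmtAux.U2_decomp R hsym π t1 t2]
    ring
  have hUwfun : (fun π => Uw n R π t1 t2)
      = fun π => 1 * U1 n R π t1 t2
          + (-2 * (((t2 : ℝ) - t1 - 1) / ((n : ℝ) - 2))) * StmtAux.LL n R t1 t2 π
          + (((t2 : ℝ) - t1 - 1) / ((n : ℝ) - 2)) * StmtAux.SS n R := by
    funext π
    rw [show Uw n R π t1 t2 = (((n : ℝ) - t2 + t1 - 1) * U1 n R π t1 t2
        + ((t2 : ℝ) - t1 - 1) * U2 n R π t1 t2) / ((n : ℝ) - 2) from rfl,
      StmtAux.U2_decomp R hsym π t1 t2]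
    field_simp
    ring
  -- covariance relations
  have hV1r : pvar n (fun π => U1 n R π t1 t2)
      = pcov n (fun π => U1 n R π t1 t2) (fun π => U1 n R π t1 t2) :=
    StmtAux.pvar_eq_pcov _
  have hCr : pcov n (fun π => U1 n R π t1 t2) (fun π => U2 n R π t1 t2)
      = pcov n (fun π => U1 n R π t1 t2) (fun π => U1 n R π t1 t2)
        - 2 * pcov n (fun π => U1 n R π t1 t2) (fun π => StmtAux.LL n R t1 t2 π) := by
    rw [hU2fun, StmtAux.pcov_f_combo]
    ring
  have hV2r : pvar n (fun π => U2 n R π t1 t2)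
      = pcov n (fun π => U1 n R π t1 t2) (fun π => U1 n R π t1 t2)
        - 4 * pcov n (fun π => U1 n R π t1 t2) (fun π => StmtAux.LL n R t1 t2 π)
        + 4 * pcov n (fun π => StmtAux.LL n R t1 t2 π) (fun π => StmtAux.LL n R t1 t2 π) := by
    rw [StmtAux.pvar_eq_pcov, hU2fun, StmtAux.pcov_combo]
    ring
  have hVwr : pvar n (fun π => Uw n R π t1 t2)
      = pcov n (fun π => U1 n R π t1 t2) (fun π => U1 n R π t1 t2)
        - 4 * (((t2 : ℝ) - t1 - 1) / ((n : ℝ) - 2))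
            * pcov n (fun π => U1 n R π t1 t2) (fun π => StmtAux.LL n R t1 t2 π)
        + 4 * (((t2 : ℝ) - t1 - 1) / ((n : ℝ) - 2)) ^ 2
            * pcov n (fun π => StmtAux.LL n R t1 t2 π) (fun π => StmtAux.LL n R t1 t2 π) := by
    rw [StmtAux.pvar_eq_pcov, hUwfun, StmtAux.pcov_combo]
    ring
  have hVdr : pvar n (fun π => Udiff n R π t1 t2)
      = 4 * pcov n (fun π => StmtAux.LL n R t1 t2 π) (fun π => StmtAux.LL n R t1 t2 π) := by
    rw [StmtAux.pvar_eq_pcov, hUdfun, StmtAux.pcov_combo]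
    ring
  -- the key orthogonality relation
  have hKEY : pcov n (fun π => U1 n R π t1 t2) (fun π => StmtAux.LL n R t1 t2 π)
      = 2 * (((t2 : ℝ) - t1 - 1) / ((n : ℝ) - 2))
          * pcov n (fun π => StmtAux.LL n R t1 t2 π) (fun π => StmtAux.LL n R t1 t2 π) := by
    rw [StmtAux.pcov_eq, StmtAux.pcov_eq]
    rw [hE1L, he1, heL, hELL]
    field_simp
    ring
  have hdet : pvar n (fun π => U1 n R π t1 t2) * pvar n (fun π => U2 n R π t1 t2)
        - pcov n (fun π => U1 n R π t1 t2) (fun π => U2 n R π t1 t2)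
          * pcov n (fun π => U1 n R π t1 t2) (fun π => U2 n R π t1 t2)
      = pvar n (fun π => Uw n R π t1 t2) * pvar n (fun π => Udiff n R π t1 t2) := by
    rw [hV1r, hCr, hV2r, hVwr, hVdr, hKEY]
    ring
  constructor
  · rw [Matrix.isUnit_iff_isUnit_det, Matrix.det_fin_two_of, isUnit_iff_ne_zero]
    rw [hdet]
    exact ne_of_gt (mul_pos hvarw hvard)
  · intro π
    rw [StmtAux.quadform_eval]
    have hZw2 : Zw n R π t1 t2 ^ 2
        = (Uw n R π t1 t2 - pexp n (fun σ => Uw n R σ t1 t2)) ^ 2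
            / pvar n (fun σ => Uw n R σ t1 t2) := by
      show ((Uw n R π t1 t2 - pexp n (fun σ => Uw n R σ t1 t2))
          / Real.sqrt (pvar n (fun σ => Uw n R σ t1 t2))) ^ 2 = _
      rw [div_pow, Real.sq_sqrt (le_of_lt hvarw)]
    have hZd2 : Zdiff n R π t1 t2 ^ 2
        = (Udiff n R π t1 t2 - pexp n (fun σ => Udiff n R σ t1 t2)) ^ 2
            / pvar n (fun σ => Udiff n R σ t1 t2) := by
      show ((Udiff n R π t1 t2 - pexp n (fun σ => Udiff n R σ t1 t2))
          / Real.sqrt (pvar n (fun σ => Udiff n R σ t1 t2))) ^ 2 = _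
      rw [div_pow, Real.sq_sqrt (le_of_lt hvard)]
    rw [hZw2, hZd2]
    have hxw : Uw n R π t1 t2 - pexp n (fun σ => Uw n R σ t1 t2)
        = (U1 n R π t1 t2 - pexp n (fun σ => U1 n R σ t1 t2))
          - 2 * (((t2 : ℝ) - t1 - 1) / ((n : ℝ) - 2))
            * (StmtAux.LL n R t1 t2 π - pexp n (fun σ => StmtAux.LL n R t1 t2 σ)) := by
      have h1 : Uw n R π t1 t2 = 1 * U1 n R π t1 t2
          + (-2 * (((t2 : ℝ) - t1 - 1) / ((n : ℝ) - 2))) * StmtAux.LL n R t1 t2 π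
          + (((t2 : ℝ) - t1 - 1) / ((n : ℝ) - 2)) * StmtAux.SS n R := congrFun hUwfun π
      have h2 : pexp n (fun σ => Uw n R σ t1 t2)
          = 1 * pexp n (fun σ => U1 n R σ t1 t2)
            + (-2 * (((t2 : ℝ) - t1 - 1) / ((n : ℝ) - 2)))
                * pexp n (fun σ => StmtAux.LL n R t1 t2 σ)
            + (((t2 : ℝ) - t1 - 1) / ((n : ℝ) - 2)) * StmtAux.SS n R := by
        rw [hUwfun, StmtAux.pexp_combo]
      rw [h1, h2]
      ring
    have hyd : U2 n R π t1 t2 - pexp n (fun σ => U2 n R σ t1 t2)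
        = (U1 n R π t1 t2 - pexp n (fun σ => U1 n R σ t1 t2))
          - 2 * (StmtAux.LL n R t1 t2 π - pexp n (fun σ => StmtAux.LL n R t1 t2 σ)) := by
      have h1 : U2 n R π t1 t2 = 1 * U1 n R π t1 t2
          + (-2) * StmtAux.LL n R t1 t2 π + StmtAux.SS n R := congrFun hU2fun π
      have h2 : pexp n (fun σ => U2 n R σ t1 t2)
          = 1 * pexp n (fun σ => U1 n R σ t1 t2)
            + (-2) * pexp n (fun σ => StmtAux.LL n R t1 t2 σ) + StmtAux.SS n R := by
        rw [hU2fun, StmtAux.pexp_combo]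
      rw [h1, h2]
      ring
    have hdd : Udiff n R π t1 t2 - pexp n (fun σ => Udiff n R σ t1 t2)
        = 2 * (StmtAux.LL n R t1 t2 π - pexp n (fun σ => StmtAux.LL n R t1 t2 σ)) := by
      have h1 : Udiff n R π t1 t2 = 0 * U1 n R π t1 t2
          + 2 * StmtAux.LL n R t1 t2 π + (- StmtAux.SS n R) := congrFun hUdfun π
      have h2 : pexp n (fun σ => Udiff n R σ t1 t2)
          = 0 * pexp n (fun σ => U1 n R σ t1 t2)
            + 2 * pexp n (fun σ => StmtAux.LL n R t1 t2 σ) + (- StmtAux.SS n R) := by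
        rw [hUdfun, StmtAux.pexp_combo]
      rw [h1, h2]
      ring
    rw [hyd, hxw, hdd]
    exact StmtAux.final_algebra
      (pcov n (fun π => U1 n R π t1 t2) (fun π => U1 n R π t1 t2))
      (pcov n (fun π => U1 n R π t1 t2) (fun π => StmtAux.LL n R t1 t2 π))
      (pcov n (fun π => StmtAux.LL n R t1 t2 π) (fun π => StmtAux.LL n R t1 t2 π))
      (((t2 : ℝ) - t1 - 1) / ((n : ℝ) - 2))
      (U1 n R π t1 t2 - pexp n (fun σ => U1 n R σ t1 t2))
      (StmtAux.LL n R t1 t2 π - pexp n (fun σ => StmtAux.LL n R t1 t2 σ))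
      _ _ _ _ _ hV1r hCr hV2r hVwr hVdr hKEY hvarw hvard
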